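/- Fix distinct indices j, k ∈ {1,…,n}. Let F_j(x) denote the function obtained from f_j by replacing λ_k with the variable x (all other λ's and all matrices V_i fixed), and let F_k(x) denote the function obtained from f_k by replacing λ_j with x. Then F_j is differentiable at x = λ_k, F_k is differentiable at x = λ_j, and F_j′(λ_k) = F_k′(λ_j); that is, the spin functions satisfy the symmetry ∂f_j/∂λ_k = ∂f_k/∂λ_j. -/

import Mathlib

open BigOperators

noncomputable section

/-- `|g| = g₀ + g₁ + ⋯ + g_{m-1}`. -/
def gAbs (m : ℕ) (g : ZMod m → ℂ) : ℂ :=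
  ∑ s ∈ Finset.range m, g (s : ZMod m)

/-- The spin function
`fₖ = −(1/(m·|g|))·Σ_{h=0}^{m−1}Σ_{i=0}^{m−1}Σ_{t≠k}(V_i)ₖₜ·(V_{i−h−1})ₜₖ·λₜ^{m−h−1}·λₖ^{h}/
(λₜ^m − λₖ^m)`, indices of `V` read modulo `m`. -/
def fSpin (m n : ℕ) (g : ZMod m → ℂ) (V : ZMod m → Matrix (Fin n) (Fin n) ℂ)
    (lam : Fin n → ℂ) (k : Fin n) : ℂ :=
  -(1 / ((m : ℂ) * gAbs m g)) *
    ∑ h ∈ Finset.range m, ∑ i ∈ Finset.range m, ∑ t ∈ Finset.univ.erase k,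
      (V (i : ZMod m)) k t * (V ((i : ZMod m) - (h : ZMod m) - 1)) t k *
        lam t ^ (m - h - 1) * lam k ^ h / (lam t ^ m - lam k ^ m)

namespace SpinAux

def Gq (m p : ℕ) (a b : ℂ) : ℂ :=
  ((p : ℂ) * a ^ (p - 1) * (a ^ m - b ^ m) - a ^ p * ((m : ℂ) * a ^ (m - 1))) /
    (a ^ m - b ^ m) ^ 2

lemma hasDerivAt_q (m p : ℕ) (a b : ℂ) (hab : a ^ m - b ^ m ≠ 0) :
    HasDerivAt (fun x : ℂ => x ^ p / (x ^ m - b ^ m)) (Gq m p a b) a :=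
  (hasDerivAt_pow p a).div ((hasDerivAt_pow m a).sub_const (b ^ m)) hab

lemma sum_range_zmod (m : ℕ) [NeZero m] (f : ZMod m → ℂ) :
    ∑ i ∈ Finset.range m, f (i : ZMod m) = ∑ i : ZMod m, f i := by
  refine Finset.sum_nbij' (fun i => (i : ZMod m)) (fun i => i.val) ?_ ?_ ?_ ?_ ?_
  · intro a _; exact Finset.mem_univ _
  · intro b _; exact Finset.mem_range.2 (ZMod.val_lt b)
  · intro a ha; exact ZMod.val_cast_of_lt (Finset.mem_range.1 ha)
  · intro b _; exact ZMod.natCast_zmod_val b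
  · intro a _; rfl

def sig (m h : ℕ) : ℕ := if h = m - 1 then m - 1 else m - 2 - h

lemma sig_lt (m h : ℕ) (hm : h < m) : sig m h < m := by
  unfold sig; split <;> omega

lemma sig_sig (m h : ℕ) (hm : h < m) : sig m (sig m h) = h := by
  unfold sig; split <;> split <;> omega

lemma sig_cast (m h : ℕ) [NeZero m] (hm : h < m) :
    ((sig m h : ℕ) : ZMod m) = -((h : ZMod m) + 2) := by
  have hm1 : 1 ≤ m := Nat.pos_of_ne_zero (NeZero.ne m)
  have hd : (m : ℕ) ∣ (sig m h + (h + 2)) := by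
    unfold sig; split
    · exact ⟨2, by omega⟩
    · exact ⟨1, by omega⟩
  have h0 : ((sig m h + (h + 2) : ℕ) : ZMod m) = 0 :=
    (ZMod.natCast_eq_zero_iff _ _).2 hd
  push_cast at h0
  exact eq_neg_of_add_eq_zero_left h0

lemma key_scalar (m h : ℕ) (hm : h < m) (a b : ℂ) (hab : a ^ m - b ^ m ≠ 0) :
    b ^ h * Gq m (m - h - 1) a b = a ^ sig m h * Gq m (m - sig m h - 1) b a := by
  have hba : b ^ m - a ^ m ≠ 0 := fun hh => hab (by linear_combination -hh)
  rcases eq_or_ne h (m - 1) with he | he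
  · have hs : sig m h = h := by unfold sig; rw [if_pos he]; omega
    have e1 : m - h - 1 = 0 := by omega
    rw [hs, e1, he]
    unfold Gq
    field_simp
    ring
  · have hm2 : h + 2 ≤ m := by omega
    obtain ⟨q, hq⟩ : ∃ q, m = h + q + 2 := ⟨m - h - 2, by omega⟩
    have hs : sig m h = q := by unfold sig; rw [if_neg he]; omega
    have e1 : m - h - 1 = q + 1 := by omega
    have e3 : m - q - 1 = h + 1 := by omega
    rw [hs, e1, e3]
    unfold Gq
    subst hq
    have e4 : q + 1 - 1 = q := by omega
    have e5 : h + 1 - 1 = h := by omega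
    have e6 : h + q + 2 - 1 = h + q + 1 := by omega
    rw [e4, e5, e6]
    field_simp
    push_cast
    ring


lemma main_hasDerivAt (m n : ℕ) [NeZero m] (g : ZMod m → ℂ)
    (V : ZMod m → Matrix (Fin n) (Fin n) ℂ) (lam : Fin n → ℂ) (j k : Fin n)
    (hjk : j ≠ k) (hab : lam k ^ m - lam j ^ m ≠ 0) :
    HasDerivAt (fun x : ℂ => fSpin m n g V (Function.update lam k x) j)
      (-(1 / ((m : ℂ) * gAbs m g)) *
        ∑ h ∈ Finset.range m, ∑ i ∈ Finset.range m,
          (V (i : ZMod m)) j k * (V ((i : ZMod m) - (h : ZMod m) - 1)) k j *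
            lam j ^ h * Gq m (m - h - 1) (lam k) (lam j)) (lam k) := by
  have hstep : ∀ h ∈ Finset.range m, ∀ i ∈ Finset.range m, ∀ t ∈ Finset.univ.erase j,
      HasDerivAt (fun x : ℂ =>
        (V (i : ZMod m)) j t * (V ((i : ZMod m) - (h : ZMod m) - 1)) t j *
          Function.update lam k x t ^ (m - h - 1) * Function.update lam k x j ^ h /
          (Function.update lam k x t ^ m - Function.update lam k x j ^ m))
        (if t = k then
          (V (i : ZMod m)) j k * (V ((i : ZMod m) - (h : ZMod m) - 1)) k j *
            lam j ^ h * Gq m (m - h - 1) (lam k) (lam j)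
         else 0) (lam k) := by
    intro h _ i _ t ht
    by_cases htk : t = k
    · subst htk
      simp only [Function.update_self, Function.update_of_ne hjk, if_pos rfl]
      have hfun : (fun x : ℂ =>
          (V (i : ZMod m)) j t * (V ((i : ZMod m) - (h : ZMod m) - 1)) t j *
            x ^ (m - h - 1) * lam j ^ h / (x ^ m - lam j ^ m)) =
          (fun x : ℂ =>
            ((V (i : ZMod m)) j t * (V ((i : ZMod m) - (h : ZMod m) - 1)) t j * lam j ^ h) *
              (x ^ (m - h - 1) / (x ^ m - lam j ^ m))) := by
        funext x; ring
      rw [hfun, show (V (i : ZMod m)) j t * (V ((i : ZMod m) - (h : ZMod m) - 1)) t j *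
            lam j ^ h * Gq m (m - h - 1) (lam t) (lam j) =
          ((V (i : ZMod m)) j t * (V ((i : ZMod m) - (h : ZMod m) - 1)) t j * lam j ^ h) *
            Gq m (m - h - 1) (lam t) (lam j) from by ring]
      exact (hasDerivAt_q m (m - h - 1) (lam t) (lam j) hab).const_mul _
    · simp only [Function.update_of_ne htk, Function.update_of_ne hjk, if_neg htk]
      exact hasDerivAt_const _ _
  have H : HasDerivAt (fun x : ℂ => fSpin m n g V (Function.update lam k x) j)
      (-(1 / ((m : ℂ) * gAbs m g)) *
        ∑ h ∈ Finset.range m, ∑ i ∈ Finset.range m, ∑ t ∈ Finset.univ.erase j,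
          (if t = k then
            (V (i : ZMod m)) j k * (V ((i : ZMod m) - (h : ZMod m) - 1)) k j *
              lam j ^ h * Gq m (m - h - 1) (lam k) (lam j)
           else 0)) (lam k) := by
    unfold fSpin
    exact HasDerivAt.const_mul _ (HasDerivAt.fun_sum fun h hh => HasDerivAt.fun_sum fun i hi =>
      HasDerivAt.fun_sum fun t ht => hstep h hh i hi t ht)
  convert H using 2
  refine Finset.sum_congr rfl fun h _ => Finset.sum_congr rfl fun i _ => ?_
  rw [Finset.sum_ite_eq' _ k, if_pos (Finset.mem_erase.2 ⟨hjk.symm.symm.symm, Finset.mem_univ _⟩)]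

lemma coeff_shift (m : ℕ) [NeZero m] {n : ℕ} (V : ZMod m → Matrix (Fin n) (Fin n) ℂ)
    (j k : Fin n) (h : ℕ) (hm : h < m) :
    ∑ i ∈ Finset.range m, (V (i : ZMod m)) j k * (V ((i : ZMod m) - (h : ZMod m) - 1)) k j =
      ∑ i ∈ Finset.range m,
        (V (i : ZMod m)) k j * (V ((i : ZMod m) - ((sig m h : ℕ) : ZMod m) - 1)) j k := by
  rw [sum_range_zmod m (fun z => (V z) j k * (V (z - (h : ZMod m) - 1)) k j),
    sum_range_zmod m (fun z => (V z) k j * (V (z - ((sig m h : ℕ) : ZMod m) - 1)) j k)]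
  refine Fintype.sum_equiv (Equiv.subRight ((h : ZMod m) + 1)) _ _ (fun x => ?_)
  simp only [Equiv.subRight_apply, sig_cast m h hm]
  rw [show x - ((h : ZMod m) + 1) - -((h : ZMod m) + 2) - 1 = x from by ring,
    show x - ((h : ZMod m) + 1) = x - (h : ZMod m) - 1 from by ring]
  ring

lemma sum_symm (m : ℕ) [NeZero m] {n : ℕ} (V : ZMod m → Matrix (Fin n) (Fin n) ℂ)
    (lam : Fin n → ℂ) (j k : Fin n) (hab : lam k ^ m - lam j ^ m ≠ 0) :
    ∑ h ∈ Finset.range m, ∑ i ∈ Finset.range m,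
        (V (i : ZMod m)) j k * (V ((i : ZMod m) - (h : ZMod m) - 1)) k j *
          lam j ^ h * Gq m (m - h - 1) (lam k) (lam j) =
      ∑ h ∈ Finset.range m, ∑ i ∈ Finset.range m,
        (V (i : ZMod m)) k j * (V ((i : ZMod m) - (h : ZMod m) - 1)) j k *
          lam k ^ h * Gq m (m - h - 1) (lam j) (lam k) := by
  refine Finset.sum_nbij' (sig m) (sig m) ?_ ?_ ?_ ?_ ?_
  · intro h hh; exact Finset.mem_range.2 (sig_lt m h (Finset.mem_range.1 hh))
  · intro h hh; exact Finset.mem_range.2 (sig_lt m h (Finset.mem_range.1 hh))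
  · intro h hh; exact sig_sig m h (Finset.mem_range.1 hh)
  · intro h hh; exact sig_sig m h (Finset.mem_range.1 hh)
  · intro h hh
    have hm := Finset.mem_range.1 hh
    rw [show (∑ i ∈ Finset.range m,
          (V (i : ZMod m)) j k * (V ((i : ZMod m) - (h : ZMod m) - 1)) k j *
            lam j ^ h * Gq m (m - h - 1) (lam k) (lam j)) =
        (∑ i ∈ Finset.range m,
          (V (i : ZMod m)) j k * (V ((i : ZMod m) - (h : ZMod m) - 1)) k j) *
          (lam j ^ h * Gq m (m - h - 1) (lam k) (lam j)) from by
      rw [Finset.sum_mul]; exact Finset.sum_congr rfl fun i _ => by ring]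
    rw [coeff_shift m V j k h hm, key_scalar m h hm (lam k) (lam j) hab]
    rw [Finset.sum_mul]
    exact Finset.sum_congr rfl fun i _ => by ring

end SpinAux

/-- For distinct `j, k`, let `F_j(x)` be `f_j` with `λₖ` replaced by `x`
and `F_k(x)` be `f_k` with `λⱼ` replaced by `x`. Then `F_j` is differentiable at `λₖ`, `F_k`
is differentiable at `λⱼ`, and `F_j′(λₖ) = F_k′(λⱼ)`; that is, `∂f_j/∂λ_k = ∂f_k/∂λ_j`. -/
theorem spin_f_symmetry (m n d : ℕ) [NeZero m] (hn : 0 < n) (hd : 0 < d)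
    (lam : Fin n → ℂ) (g : ZMod m → ℂ)
    (hlam : ∀ j, lam j ≠ 0)
    (hsep : ∀ a b : Fin n, a ≠ b → lam a ^ m ≠ lam b ^ m)
    (hg : gAbs m g ≠ 0)
    (vt : ZMod m → Matrix (Fin n) (Fin d) ℂ) (wt : ZMod m → Matrix (Fin d) (Fin n) ℂ)
    (j k : Fin n) (hjk : j ≠ k) :
    DifferentiableAt ℂ
      (fun x : ℂ => fSpin m n g (fun i => vt i * wt i) (Function.update lam k x) j)
      (lam k) ∧
    DifferentiableAt ℂ
      (fun x : ℂ => fSpin m n g (fun i => vt i * wt i) (Function.update lam j x) k)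
      (lam j) ∧
    deriv (fun x : ℂ => fSpin m n g (fun i => vt i * wt i) (Function.update lam k x) j)
        (lam k) =
      deriv (fun x : ℂ => fSpin m n g (fun i => vt i * wt i) (Function.update lam j x) k)
        (lam j) := by
  have hab : lam k ^ m - lam j ^ m ≠ 0 := sub_ne_zero.2 (hsep k j (Ne.symm hjk))
  have hba : lam j ^ m - lam k ^ m ≠ 0 := sub_ne_zero.2 (hsep j k hjk)
  have H1 := SpinAux.main_hasDerivAt m n g (fun i => vt i * wt i) lam j k hjk hab
  have H2 := SpinAux.main_hasDerivAt m n g (fun i => vt i * wt i) lam k j (Ne.symm hjk) hba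
  refine ⟨H1.differentiableAt, H2.differentiableAt, ?_⟩
  rw [H1.deriv, H2.deriv]
  congr 1
  exact SpinAux.sum_symm m (fun i => vt i * wt i) lam j k hab
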